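/- Let P be a probability distribution on ℝ with finite first moment and cdf F_P, let N_1,…,N_q be i.i.d. with law P, and define EI_q^↑(P, z) = E[(max(N_1,…,N_q) − z)₊]. Then for all real a ≤ b and q ≥ 1: ∫_a^b F_P(u)^q du = (b − a) + EI_q^↑(P, b) − EI_q^↑(P, a). -/

import Mathlib

open MeasureTheory

/-- for a probability measure `P` on `ℝ` with finite first moment, with
`EI_q^↑(P,z) = E[(max(N_1,…,N_q) − z)₊]` for `N_i` i.i.d. `P`, and any `a ≤ b`, `q ≥ 1`:
`∫_a^b F_P(u)^q du = (b − a) + EI_q^↑(P,b) − EI_q^↑(P,a)`. -/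
theorem stmt5 (P : Measure ℝ) [IsProbabilityMeasure P]
    (hmom : Integrable (fun x : ℝ => x) P)
    (q : ℕ) (hq : 1 ≤ q) (a b : ℝ) (hab : a ≤ b) :
    (∫ u in a..b, ((P (Set.Iic u)).toReal) ^ q) =
      (b - a)
      + (∫ y : Fin q → ℝ, max ((⨆ i, y i) - b) 0 ∂(Measure.pi fun _ => P))
      - (∫ y : Fin q → ℝ, max ((⨆ i, y i) - a) 0 ∂(Measure.pi fun _ => P)) := by
  have hne : Nonempty (Fin q) := ⟨⟨0, hq⟩⟩
  set μ : Measure (Fin q → ℝ) := Measure.pi fun _ => P with hμdef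
  have hX : Measurable fun y : Fin q → ℝ => ⨆ i, y i :=
    Measurable.iSup fun i => measurable_pi_apply i
  -- coordinate integrability
  have hcoord : ∀ i : Fin q, Integrable (fun y : Fin q → ℝ => y i) μ := by
    intro i
    have hmap : μ.map (Function.eval i) = P := by
      ext s hs
      rw [Measure.map_apply (measurable_pi_apply i) hs]
      have hpre : Function.eval i ⁻¹' s
          = Set.pi Set.univ (Function.update (fun _ : Fin q => (Set.univ : Set ℝ)) i s) := by
        rw [Set.eval_preimage]
      rw [hpre, hμdef, Measure.pi_pi]
      rw [Finset.prod_eq_single i]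
      · simp
      · intro j _ hj
        simp [Function.update_of_ne hj]
      · simp
    have h2 : Integrable (fun x : ℝ => x) (μ.map (Function.eval i)) := hmap ▸ hmom
    exact h2.comp_measurable (measurable_pi_apply i)
  -- integrability of the positive part
  have hint : ∀ z : ℝ, Integrable (fun y : Fin q → ℝ => max ((⨆ i, y i) - z) 0) μ := by
    intro z
    have hmeas : AEStronglyMeasurable (fun y : Fin q → ℝ => max ((⨆ i, y i) - z) 0) μ :=
      ((hX.sub measurable_const).max measurable_const).aestronglyMeasurable
    have hbd : Integrable (fun y : Fin q → ℝ => (∑ i, |y i|) + |z|) μ :=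
      (integrable_finset_sum _ fun i _ => (hcoord i).abs).add (integrable_const _)
    refine hbd.mono' hmeas ?_
    filter_upwards with y
    have hsup : (⨆ i, y i) ≤ ∑ j, |y j| := by
      apply ciSup_le
      intro i
      refine le_trans (le_abs_self _) ?_
      exact Finset.single_le_sum (f := fun j => |y j|) (fun j _ => abs_nonneg (y j))
        (Finset.mem_univ i)
    have h0 : (0:ℝ) ≤ ∑ j, |y j| := Finset.sum_nonneg fun j _ => abs_nonneg _
    have hz : -|z| ≤ z := neg_abs_le z
    rw [Real.norm_eq_abs, abs_of_nonneg (le_max_right _ _)]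
    rcases le_total ((⨆ i, y i) - z) 0 with h | h
    · rw [max_eq_right h]; positivity
    · rw [max_eq_left h]; linarith
  -- the cdf power as a measure
  have hset : ∀ u : ℝ, {y : Fin q → ℝ | (⨆ i, y i) ≤ u}
      = Set.pi Set.univ (fun _ : Fin q => Set.Iic u) := by
    intro u
    ext y
    simp only [Set.mem_setOf_eq, Set.mem_pi, Set.mem_univ, forall_true_left, Set.mem_Iic]
    constructor
    · intro h i
      exact le_trans (le_ciSup (Set.Finite.bddAbove (Set.finite_range _)) i) h
    · intro h
      exact ciSup_le h
  have hFq : ∀ u : ℝ, ((P (Set.Iic u)).toReal) ^ q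
      = (μ {y : Fin q → ℝ | (⨆ i, y i) ≤ u}).toReal := by
    intro u
    rw [hset, hμdef, Measure.pi_pi, Finset.prod_const, Finset.card_univ, Fintype.card_fin,
      ENNReal.toReal_pow]
  -- indicator formulation
  have hmsu : ∀ u : ℝ, MeasurableSet {y : Fin q → ℝ | (⨆ i, y i) ≤ u} := fun u =>
    measurableSet_le hX measurable_const
  have key : ∀ u : ℝ, (μ {y : Fin q → ℝ | (⨆ i, y i) ≤ u}).toReal
      = ∫ y, Set.indicator {y : Fin q → ℝ | (⨆ i, y i) ≤ u} (fun _ => (1:ℝ)) y ∂μ := by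
    intro u
    rw [integral_indicator_const (1:ℝ) (hmsu u), smul_eq_mul, mul_one, measureReal_def]
  -- Fubini
  have hs : MeasurableSet {p : ℝ × (Fin q → ℝ) | (⨆ i, p.2 i) ≤ p.1} :=
    measurableSet_le (hX.comp measurable_snd) measurable_fst
  have hintf : Integrable
      (Set.indicator {p : ℝ × (Fin q → ℝ) | (⨆ i, p.2 i) ≤ p.1} (fun _ => (1:ℝ)))
      ((volume.restrict (Set.Ioc a b)).prod μ) :=
    (integrable_const (1:ℝ)).indicator hs
  have hswap :
      (∫ u in Set.Ioc a b, ∫ y, Set.indicator {p : ℝ × (Fin q → ℝ) | (⨆ i, p.2 i) ≤ p.1}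
          (fun _ => (1:ℝ)) (u, y) ∂μ ∂volume)
      = ∫ y, ∫ u in Set.Ioc a b, Set.indicator {p : ℝ × (Fin q → ℝ) | (⨆ i, p.2 i) ≤ p.1}
          (fun _ => (1:ℝ)) (u, y) ∂volume ∂μ :=
    integral_integral_swap hintf
  -- evaluate the inner integral in u
  have hvol : ∀ s0 : ℝ, (volume (Set.Ici s0 ∩ Set.Ioc a b)).toReal
      = (b - a) + max (s0 - b) 0 - max (s0 - a) 0 := by
    intro s0
    rcases le_or_gt s0 a with h | h
    · have he : Set.Ici s0 ∩ Set.Ioc a b = Set.Ioc a b := by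
        apply Set.inter_eq_self_of_subset_right
        intro u hu
        exact le_trans h (le_of_lt hu.1)
      rw [he, Real.volume_Ioc, ENNReal.toReal_ofReal (by linarith)]
      rw [max_eq_right (by linarith), max_eq_right (by linarith)]
      ring
    · have he : Set.Ici s0 ∩ Set.Ioc a b = Set.Icc s0 b := by
        ext u
        simp only [Set.mem_inter_iff, Set.mem_Ici, Set.mem_Ioc, Set.mem_Icc]
        constructor
        · rintro ⟨h1, _, h3⟩; exact ⟨h1, h3⟩
        · rintro ⟨h1, h2⟩; exact ⟨h1, lt_of_lt_of_le h h1, h2⟩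
      rw [he, Real.volume_Icc]
      rcases le_total s0 b with h2 | h2
      · rw [ENNReal.toReal_ofReal (by linarith), max_eq_right (by linarith),
          max_eq_left (by linarith)]
        ring
      · rw [ENNReal.ofReal_of_nonpos (by linarith), ENNReal.toReal_zero,
          max_eq_left (by linarith), max_eq_left (by linarith)]
        ring
  have hinner : ∀ y : Fin q → ℝ,
      (∫ u in Set.Ioc a b, Set.indicator {p : ℝ × (Fin q → ℝ) | (⨆ i, p.2 i) ≤ p.1}
        (fun _ => (1:ℝ)) (u, y) ∂volume)
      = (b - a) + max ((⨆ i, y i) - b) 0 - max ((⨆ i, y i) - a) 0 := by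
    intro y
    have heq : (fun u : ℝ => Set.indicator {p : ℝ × (Fin q → ℝ) | (⨆ i, p.2 i) ≤ p.1}
        (fun _ => (1:ℝ)) (u, y))
        = Set.indicator (Set.Ici (⨆ i, y i)) (fun _ => (1:ℝ)) := by
      ext u
      simp only [Set.indicator_apply, Set.mem_setOf_eq, Set.mem_Ici]
    rw [heq, integral_indicator measurableSet_Ici, setIntegral_const, smul_eq_mul, mul_one,
      measureReal_def, Measure.restrict_apply measurableSet_Ici, hvol]
  calc (∫ u in a..b, ((P (Set.Iic u)).toReal) ^ q)
      = ∫ u in Set.Ioc a b, ∫ y, Set.indicator {p : ℝ × (Fin q → ℝ) | (⨆ i, p.2 i) ≤ p.1}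
          (fun _ => (1:ℝ)) (u, y) ∂μ ∂volume := by
        rw [intervalIntegral.integral_of_le hab]
        apply setIntegral_congr_fun measurableSet_Ioc
        intro u _
        dsimp only
        rw [hFq u, key u]
        apply integral_congr_ae
        filter_upwards with y
        simp only [Set.indicator_apply, Set.mem_setOf_eq]
    _ = ∫ y, ∫ u in Set.Ioc a b, Set.indicator {p : ℝ × (Fin q → ℝ) | (⨆ i, p.2 i) ≤ p.1}
          (fun _ => (1:ℝ)) (u, y) ∂volume ∂μ := hswap
    _ = ∫ y, ((b - a) + max ((⨆ i, y i) - b) 0 - max ((⨆ i, y i) - a) 0) ∂μ := by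
        apply integral_congr_ae
        filter_upwards with y
        exact hinner y
    _ = (b - a)
        + (∫ y : Fin q → ℝ, max ((⨆ i, y i) - b) 0 ∂μ)
        - (∫ y : Fin q → ℝ, max ((⨆ i, y i) - a) 0 ∂μ) := by
        have e1 : (∫ y : Fin q → ℝ,
              ((b - a) + max ((⨆ i, y i) - b) 0 - max ((⨆ i, y i) - a) 0) ∂μ)
            = (∫ y : Fin q → ℝ, ((b - a) + max ((⨆ i, y i) - b) 0) ∂μ)
              - ∫ y : Fin q → ℝ, max ((⨆ i, y i) - a) 0 ∂μ :=
          integral_sub ((integrable_const _).add (hint b)) (hint a)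
        have e2 : (∫ y : Fin q → ℝ, ((b - a) + max ((⨆ i, y i) - b) 0) ∂μ)
            = (b - a) + ∫ y : Fin q → ℝ, max ((⨆ i, y i) - b) 0 ∂μ := by
          rw [integral_add (integrable_const _) (hint b), integral_const]
          simp
        rw [e1, e2]
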